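/- In two variables, a vector polynomial v ∈ (P_s)^2 satisfies div v = 0 if and only if v = rot q := (∂q/∂y, −∂q/∂x) for some q ∈ P_{s+1}. -/

import Mathlib

open MvPolynomial

noncomputable def integ (i : Fin 2) : MvPolynomial (Fin 2) ℝ →ₗ[ℝ] MvPolynomial (Fin 2) ℝ :=
  (Finsupp.lsum ℝ fun m => ((m i + 1 : ℝ)⁻¹) • (MvPolynomial.monomial (m + Finsupp.single i 1))) ∘ₗ
    (AddMonoidAlgebra.coeffLinearEquiv ℝ).toLinearMap

lemma integ_monomial (i : Fin 2) (m : Fin 2 →₀ ℕ) (a : ℝ) :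
    integ i (monomial m a) = monomial (m + Finsupp.single i 1) ((m i + 1 : ℝ)⁻¹ * a) := by
  rw [integ, ← single_eq_monomial, LinearMap.comp_apply]
  erw [Finsupp.lsum_single]
  rw [LinearMap.smul_apply, smul_monomial, smul_eq_mul]

lemma add_single_apply (i : Fin 2) (m : Fin 2 →₀ ℕ) :
    (m + Finsupp.single i 1 : Fin 2 →₀ ℕ) i = m i + 1 := by
  simp

lemma add_single_sub_single (i : Fin 2) (m : Fin 2 →₀ ℕ) :
    m + Finsupp.single i 1 - Finsupp.single i 1 = m := by
  ext j; simp

lemma pderiv_integ (i : Fin 2) (p : MvPolynomial (Fin 2) ℝ) :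
    pderiv i (integ i p) = p := by
  induction p using MvPolynomial.induction_on' with
  | monomial m a =>
    rw [integ_monomial, pderiv_monomial, add_single_sub_single, add_single_apply]
    congr 1
    push_cast
    field_simp
  | add p q hp hq => rw [map_add, map_add, hp, hq]

lemma pderiv_pderiv_comm (i j : Fin 2) (p : MvPolynomial (Fin 2) ℝ) :
    pderiv i (pderiv j p) = pderiv j (pderiv i p) := by
  induction p using MvPolynomial.induction_on' with
  | monomial m a =>
    rw [pderiv_monomial, pderiv_monomial, pderiv_monomial, pderiv_monomial]
    rcases eq_or_ne i j with rfl | hij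
    · rfl
    · have h1 : ∀ k l : Fin 2, k ≠ l → ∀ n : Fin 2 →₀ ℕ,
          (n - Finsupp.single k 1 : Fin 2 →₀ ℕ) l = n l := by
        intro k l hkl n
        simp [Finsupp.tsub_apply, Finsupp.single_apply, hkl]
      rw [h1 j i hij.symm, h1 i j hij]
      have h2 : m - Finsupp.single j 1 - Finsupp.single i 1
          = m - Finsupp.single i 1 - Finsupp.single j 1 := by
        ext k; simp [Finsupp.tsub_apply]; omega
      rw [h2]
      ring_nf
  | add p q hp hq => rw [map_add, map_add, map_add, map_add, hp, hq]

lemma pderiv_integ_comm (i j : Fin 2) (hij : j ≠ i) (p : MvPolynomial (Fin 2) ℝ) :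
    pderiv j (integ i p) = integ i (pderiv j p) := by
  induction p using MvPolynomial.induction_on' with
  | monomial m a =>
    rw [integ_monomial, pderiv_monomial, pderiv_monomial, integ_monomial]
    have h1 : (m + Finsupp.single i 1 : Fin 2 →₀ ℕ) j = m j := by
      simp [Finsupp.add_apply, Finsupp.single_apply, hij.symm]
    have h2 : (m - Finsupp.single j 1 : Fin 2 →₀ ℕ) i = m i := by
      simp [Finsupp.tsub_apply, Finsupp.single_apply, hij]
    rw [h1, h2]
    rcases Nat.eq_zero_or_pos (m j) with hz | hpos
    · rw [hz]; push_cast; simp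
    · have h3 : m + Finsupp.single i 1 - Finsupp.single j 1
          = m - Finsupp.single j 1 + Finsupp.single i 1 := by
        ext k
        simp only [Finsupp.add_apply, Finsupp.tsub_apply, Finsupp.single_apply]
        rcases eq_or_ne j k with rfl | h
        · simp [hij]; omega
        · simp [h]
      rw [h3]
      ring_nf
  | add p q hp hq => rw [map_add, map_add, map_add, map_add, hp, hq]

lemma totalDegree_integ_le (i : Fin 2) (p : MvPolynomial (Fin 2) ℝ) :
    (integ i p).totalDegree ≤ p.totalDegree + 1 := by
  have : integ i p = ∑ m ∈ p.support, monomial (m + Finsupp.single i 1)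
      ((m i + 1 : ℝ)⁻¹ * coeff m p) := by
    conv_lhs => rw [p.as_sum]
    rw [map_sum]
    exact Finset.sum_congr rfl fun m _ => integ_monomial i m _
  rw [this]
  refine (totalDegree_finset_sum _ _).trans (Finset.sup_le fun m hm => ?_)
  refine (totalDegree_monomial_le _ _).trans ?_
  have e1 : ∀ n : Fin 2 →₀ ℕ, (n.sum fun _ ↦ id) = n 0 + n 1 := by
    intro n
    rw [Finsupp.sum_fintype _ _ (fun _ => rfl), Fin.sum_univ_two]; rfl
  rw [e1]
  have hm2 : m 0 + m 1 ≤ p.totalDegree := by rw [← e1]; exact le_totalDegree hm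
  simp only [Finsupp.add_apply, Finsupp.single_apply]
  fin_cases i <;> simp <;> omega

lemma totalDegree_pderiv_le (i : Fin 2) (p : MvPolynomial (Fin 2) ℝ) (d : ℕ)
    (h : p.totalDegree ≤ d + 1) : (pderiv i p).totalDegree ≤ d := by
  have : pderiv i p = ∑ m ∈ p.support, monomial (m - Finsupp.single i 1)
      (coeff m p * m i) := by
    conv_lhs => rw [p.as_sum]
    rw [map_sum]
    exact Finset.sum_congr rfl fun m _ => pderiv_monomial
  rw [this]
  refine (totalDegree_finset_sum _ _).trans (Finset.sup_le fun m hm => ?_)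
  rcases Nat.eq_zero_or_pos (m i) with hz | hpos
  · rw [hz]; push_cast; rw [mul_zero, monomial_zero, totalDegree_zero]; exact Nat.zero_le d
  · refine (totalDegree_monomial_le _ _).trans ?_
    have e1 : ∀ n : Fin 2 →₀ ℕ, (n.sum fun _ ↦ id) = n 0 + n 1 := by
      intro n
      rw [Finsupp.sum_fintype _ _ (fun _ => rfl), Fin.sum_univ_two]; rfl
    have hm2 : m 0 + m 1 ≤ d + 1 := by
      rw [← e1]; exact (le_totalDegree hm).trans h
    rw [e1]
    simp only [Finsupp.tsub_apply, Finsupp.single_apply]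
    fin_cases i <;> simp at hpos ⊢ <;> omega

/-- In two variables, a vector polynomial `v ∈ (P_s)²` satisfies `div v = 0`
if and only if `v = rot q := (∂q/∂y, −∂q/∂x)` for some `q ∈ P_{s+1}`. -/
theorem div_eq_zero_iff_rot (s : ℕ) (v : Fin 2 → MvPolynomial (Fin 2) ℝ)
    (hv : ∀ i, (v i).totalDegree ≤ s) :
    pderiv 0 (v 0) + pderiv 1 (v 1) = 0 ↔
      ∃ q : MvPolynomial (Fin 2) ℝ, q.totalDegree ≤ s + 1 ∧
        v 0 = pderiv 1 q ∧ v 1 = -pderiv 0 q := by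
  constructor
  · intro h
    set A := integ 1 (v 0) with hA
    set r := v 1 + pderiv 0 A with hr
    refine ⟨A + integ 0 (-r), ?_, ?_, ?_⟩
    · have hdA : A.totalDegree ≤ s + 1 :=
        (totalDegree_integ_le 1 (v 0)).trans (Nat.add_le_add_right (hv 0) 1)
      have hdpA : (pderiv 0 A).totalDegree ≤ s := totalDegree_pderiv_le 0 A s hdA
      have hdr : r.totalDegree ≤ s :=
        (totalDegree_add _ _).trans (max_le (hv 1) hdpA)
      have hdnr : (-r).totalDegree ≤ s := by rw [totalDegree_neg]; exact hdr
      have hdi : (integ 0 (-r)).totalDegree ≤ s + 1 :=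
        (totalDegree_integ_le 0 (-r)).trans (Nat.add_le_add_right hdnr 1)
      exact (totalDegree_add _ _).trans (max_le hdA hdi)
    · have hr1 : pderiv 1 r = 0 := by
        rw [hr, map_add, pderiv_pderiv_comm 1 0 A, hA, pderiv_integ]
        rw [add_comm] at h
        exact h
      rw [map_add, pderiv_integ_comm 0 1 (by decide), map_neg, hr1, neg_zero, map_zero,
        add_zero, hA, pderiv_integ]
    · rw [map_add, pderiv_integ, neg_add, neg_neg, hr]
      ring
  · rintro ⟨q, -, h0, h1⟩
    rw [h0, h1, map_neg, pderiv_pderiv_comm 0 1 q]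
    ring
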